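/- Let ρ > 0, p > 0, α ∈ (0,1], and define μ₁, μ₂ = u + q/(2pα) ∓ √(pα/ρ + (q/(2pα))²) and ω₁, ω₂ = ρ/2 ± ρ²q/(2√(ρ²q² + 4ρp³α³)). Then ω₁ + ω₂ = ρ, ω₁μ₁ + ω₂μ₂ = ρu, ω₁μ₁² + ω₂μ₂² = ρu² + αp, and ω₁μ₁³ + ω₂μ₂³ = ρu³ + 3αpu + q. -/

import Mathlib

/-- the bi-Gaussian abscissas and weights solve the first four
moment-matching equations. -/
theorem stmt_9 (ρ u p q α : ℝ) (hρ : 0 < ρ) (hp : 0 < p) (hα : α ∈ Set.Ioc (0:ℝ) 1)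
    (μ₁ μ₂ ω₁ ω₂ : ℝ)
    (hμ₁ : μ₁ = u + q/(2*p*α) - Real.sqrt (p*α/ρ + (q/(2*p*α))^2))
    (hμ₂ : μ₂ = u + q/(2*p*α) + Real.sqrt (p*α/ρ + (q/(2*p*α))^2))
    (hω₁ : ω₁ = ρ/2 + ρ^2*q / (2 * Real.sqrt (ρ^2*q^2 + 4*ρ*p^3*α^3)))
    (hω₂ : ω₂ = ρ/2 - ρ^2*q / (2 * Real.sqrt (ρ^2*q^2 + 4*ρ*p^3*α^3))) :
    ω₁ + ω₂ = ρ ∧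
    ω₁*μ₁ + ω₂*μ₂ = ρ*u ∧
    ω₁*μ₁^2 + ω₂*μ₂^2 = ρ*u^2 + α*p ∧
    ω₁*μ₁^3 + ω₂*μ₂^3 = ρ*u^3 + 3*α*p*u + q := by
  obtain ⟨hα0, hα1⟩ := hα
  set s := Real.sqrt (p*α/ρ + (q/(2*p*α))^2) with hs
  have harg : (0:ℝ) < p*α/ρ + (q/(2*p*α))^2 := by positivity
  have hs0 : 0 < s := Real.sqrt_pos.mpr harg
  have hs2 : s^2 = p*α/ρ + (q/(2*p*α))^2 := Real.sq_sqrt harg.le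
  have hS : Real.sqrt (ρ^2*q^2 + 4*ρ*p^3*α^3) = 2*p*α*ρ*s := by
    have h1 : ρ^2*q^2 + 4*ρ*p^3*α^3 = (2*p*α*ρ*s)^2 := by
      have hρ' : ρ ≠ 0 := hρ.ne'
      have hp' : p ≠ 0 := hp.ne'
      have hα' : α ≠ 0 := hα0.ne'
      field_simp at hs2 ⊢
      nlinarith [hs2]
    rw [h1]
    exact Real.sqrt_sq (by positivity)
  rw [hS] at hω₁ hω₂
  have hρ' : ρ ≠ 0 := hρ.ne'
  have hp' : p ≠ 0 := hp.ne'
  have hα' : α ≠ 0 := hα0.ne'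
  have hs' : s ≠ 0 := hs0.ne'
  subst hμ₁ hμ₂ hω₁ hω₂
  field_simp at hs2
  refine ⟨by ring, ?_, ?_, ?_⟩
  · field_simp
    ring
  · field_simp
    linear_combination (4*p*α*s) * hs2
  · field_simp
    linear_combination (8*p*α*s*(3*p*α*u+q)) * hs2
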